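/- Let r ≥ 1, N ≥ 2, and let U ⊆ ℂ^N be a connected open set all of whose points have pairwise distinct coordinates. Let A_1,…,A_N : U → M_r(ℂ) be holomorphic. Then the following are equivalent: (i) for every j ∈ {1,…,N}, every t ∈ U and every λ ∈ ℂ \ {t_1,…,t_N}, the zero-curvature equation ∂M(λ,t)/∂t_j + [A_j(t)/(λ − t_j), M(λ,t)] − A_j(t)/(λ − t_j)² = 0 holds (where the partial derivative is taken with λ held fixed); (ii) the functions A_1,…,A_N satisfy the Schlesinger equation on U. -/

import Mathlib

open Matrix Finset

attribute [local instance] Matrix.normedAddCommGroup Matrix.normedSpace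

noncomputable def pr (N : ℕ) (i : Fin N) : (Fin N → ℂ) →L[ℂ] ℂ :=
  ContinuousLinearMap.proj i

lemma term_deriv (r N : ℕ) (z : ℂ) (i : Fin N) (A : (Fin N → ℂ) → Matrix (Fin r) (Fin r) ℂ)
    (t : Fin N → ℂ) (hz : z - t i ≠ 0) (hA : DifferentiableAt ℂ A t) :
    HasFDerivAt (fun s : Fin N → ℂ => (z - s i)⁻¹ • A s)
      ((z - t i)⁻¹ • fderiv ℂ A t +
        ((ContinuousLinearMap.smulRight (1 : ℂ →L[ℂ] ℂ) (-((z - t i) ^ 2)⁻¹)).comp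
          (0 - pr N i)).smulRight (A t)) t := by
  have hu : HasFDerivAt (fun s : Fin N → ℂ => z - s i) (0 - pr N i) t :=
    (hasFDerivAt_const z t).sub (pr N i).hasFDerivAt
  exact ((hasFDerivAt_inv hz).comp t hu).smul hA.hasFDerivAt

lemma sum_deriv (r N : ℕ) (z : ℂ) (j : Fin N)
    (A : Fin N → (Fin N → ℂ) → Matrix (Fin r) (Fin r) ℂ)
    (t : Fin N → ℂ) (hz : ∀ i, z ≠ t i) (hA : ∀ i, DifferentiableAt ℂ (A i) t) :
    fderiv ℂ (fun s => ∑ i, (z - s i)⁻¹ • A i s) t (Pi.single j 1)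
      = (∑ i, (z - t i)⁻¹ • fderiv ℂ (A i) t (Pi.single j 1)) + ((z - t j) ^ 2)⁻¹ • A j t := by
  have h1 : ∀ i, fderiv ℂ (fun s : Fin N → ℂ => (z - s i)⁻¹ • A i s) t (Pi.single j 1)
      = (z - t i)⁻¹ • fderiv ℂ (A i) t (Pi.single j 1)
        + (if i = j then ((z - t j) ^ 2)⁻¹ • A j t else 0) := by
    intro i
    rw [(term_deriv r N z i (A i) t (sub_ne_zero.mpr (hz i)) (hA i)).fderiv]
    by_cases hij : i = j
    · subst hij
      simp [pr, Pi.single_apply]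
    · simp [pr, Pi.single_apply, hij, Ne.symm hij]
  rw [show fderiv ℂ (fun s => ∑ i, (z - s i)⁻¹ • A i s) t
      = ∑ i, fderiv ℂ (fun s : Fin N → ℂ => (z - s i)⁻¹ • A i s) t from
    fderiv_fun_sum (fun i _ =>
      (term_deriv r N z i (A i) t (sub_ne_zero.mpr (hz i)) (hA i)).differentiableAt),
    ContinuousLinearMap.sum_apply]
  simp only [h1, Finset.sum_add_distrib, Finset.sum_ite_eq', Finset.mem_univ, if_true]

lemma main_identity (r N : ℕ) (A : Fin N → (Fin N → ℂ) → Matrix (Fin r) (Fin r) ℂ)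
    (t : Fin N → ℂ) (hd : ∀ i j : Fin N, i ≠ j → t i ≠ t j)
    (hA : ∀ i, DifferentiableAt ℂ (A i) t) (j : Fin N) (z : ℂ) (hz : ∀ i, z ≠ t i) :
    fderiv ℂ (fun s => ∑ i, (z - s i)⁻¹ • A i s) t (Pi.single j 1)
      + ⁅(z - t j)⁻¹ • A j t, ∑ i, (z - t i)⁻¹ • A i t⁆
      - ((z - t j) ^ 2)⁻¹ • A j t
    = ∑ k, (z - t k)⁻¹ • (fderiv ℂ (A k) t (Pi.single j 1) -
        (if k = j then -∑ m ∈ Finset.univ.erase j, (t j - t m)⁻¹ • ⁅A j t, A m t⁆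
         else (t k - t j)⁻¹ • ⁅A k t, A j t⁆)) := by
  rw [sum_deriv r N z j A t hz hA]
  have hbr : ⁅(z - t j)⁻¹ • A j t, ∑ i, (z - t i)⁻¹ • A i t⁆
      = ∑ i, ((z - t j)⁻¹ * (z - t i)⁻¹) • ⁅A j t, A i t⁆ := by
    simp only [Ring.lie_def, Finset.mul_sum, Finset.sum_mul, smul_mul_assoc, mul_smul_comm,
      smul_smul, Finset.smul_sum, ← Finset.sum_sub_distrib, smul_sub, mul_comm ((z - t _)⁻¹) ((z - t j)⁻¹)]
  rw [hbr]
  simp only [smul_sub, Finset.sum_sub_distrib]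
  -- now: (∑ C + X) + Br - X = ∑ C - ∑ S  ⟸ Br = - ∑ S
  have key : ∑ i, ((z - t j)⁻¹ * (z - t i)⁻¹) • ⁅A j t, A i t⁆
      = -∑ k, (z - t k)⁻¹ •
        (if k = j then -∑ m ∈ Finset.univ.erase j, (t j - t m)⁻¹ • ⁅A j t, A m t⁆
         else (t k - t j)⁻¹ • ⁅A k t, A j t⁆) := by
    rw [← Finset.add_sum_erase (Finset.univ) _ (Finset.mem_univ j),
        ← Finset.add_sum_erase (Finset.univ)
          (fun k => (z - t k)⁻¹ • (if k = j then _ else _)) (Finset.mem_univ j),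
        if_pos rfl, Ring.lie_def, sub_self, smul_zero, zero_add, smul_neg, neg_add, neg_neg,
        Finset.smul_sum]
    rw [show (-∑ x ∈ Finset.univ.erase j, (z - t x)⁻¹ •
          (if x = j then -∑ m ∈ Finset.univ.erase j, (t j - t m)⁻¹ • ⁅A j t, A m t⁆
           else (t x - t j)⁻¹ • ⁅A x t, A j t⁆))
        = ∑ x ∈ Finset.univ.erase j, -((z - t x)⁻¹ • ((t x - t j)⁻¹ • ⁅A x t, A j t⁆)) by
      rw [← Finset.sum_neg_distrib]
      exact Finset.sum_congr rfl fun k hk => by rw [if_neg (Finset.ne_of_mem_erase hk)]]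
    rw [← Finset.sum_add_distrib]
    refine Finset.sum_congr rfl fun k hk => ?_
    have hkj : k ≠ j := Finset.ne_of_mem_erase hk
    have hskew : ⁅A k t, A j t⁆ = -⁅A j t, A k t⁆ := by rw [Ring.lie_def, Ring.lie_def, neg_sub]
    have ha : z - t j ≠ 0 := sub_ne_zero.mpr (hz j)
    have hb : z - t k ≠ 0 := sub_ne_zero.mpr (hz k)
    have hc : t j - t k ≠ 0 := sub_ne_zero.mpr (hd j k hkj.symm)
    have hc' : t k - t j ≠ 0 := sub_ne_zero.mpr (hd k j hkj)
    rw [hskew]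
    simp only [smul_smul, smul_neg, neg_smul, neg_neg, ← add_smul]
    congr 1
    field_simp
    ring
  rw [key]
  abel

lemma coeff_zero {M : Type*} [NormedAddCommGroup M] [NormedSpace ℂ M] {N : ℕ}
    (t : Fin N → ℂ) (hd : ∀ i j : Fin N, i ≠ j → t i ≠ t j) (E : Fin N → M)
    (h : ∀ z : ℂ, (∀ i, z ≠ t i) → ∑ i, (z - t i)⁻¹ • E i = 0) (k : Fin N) : E k = 0 := by
  set S : Set ℂ := (Set.range t)ᶜ with hS
  have hSmem : ∀ z ∈ S, ∀ i, z ≠ t i := by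
    intro z hz i hzi
    exact hz ⟨i, hzi.symm⟩
  have hne : Filter.NeBot (nhdsWithin (t k) S) := by
    rw [← mem_closure_iff_nhdsWithin_neBot]
    exact ((Set.finite_range t).countable.dense_compl ℂ).closure_eq ▸ Set.mem_univ _
  set φ : ℂ → M := fun z => E k + ∑ i ∈ Finset.univ.erase k, ((z - t k) * (z - t i)⁻¹) • E i
    with hφ
  have hcont : ContinuousAt φ (t k) := by
    apply ContinuousAt.add continuousAt_const
    apply tendsto_finset_sum
    intro i hi
    have hti : t k - t i ≠ 0 := sub_ne_zero.mpr (hd k i (Finset.ne_of_mem_erase hi).symm)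
    exact (((continuousAt_id.sub continuousAt_const)).mul
      (((continuousAt_id.sub continuousAt_const)).inv₀ hti)).smul continuousAt_const
  have hval : φ (t k) = E k := by
    simp [hφ]
  have h1 : Filter.Tendsto φ (nhdsWithin (t k) S) (nhds (E k)) := by
    rw [← hval]
    exact hcont.continuousWithinAt
  have h2 : ∀ z ∈ S, φ z = 0 := by
    intro z hz
    have hzk : z - t k ≠ 0 := sub_ne_zero.mpr (hSmem z hz k)
    have : φ z = (z - t k) • ∑ i, (z - t i)⁻¹ • E i := by
      rw [Finset.smul_sum, ← Finset.add_sum_erase _ _ (Finset.mem_univ k)]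
      rw [smul_smul, mul_inv_cancel₀ hzk, one_smul]
      simp only [hφ, smul_smul]
    rw [this, h z (hSmem z hz), smul_zero]
  have h3 : Filter.Tendsto φ (nhdsWithin (t k) S) (nhds 0) := by
    apply Filter.Tendsto.congr' _ tendsto_const_nhds
    filter_upwards [self_mem_nhdsWithin] with z hz
    exact (h2 z hz).symm
  exact tendsto_nhds_unique h1 h3


/-- **Zero-curvature formulation of the Schlesinger equation.**
For holomorphic `A₁,…,A_N : U → Mₙ(ℂ)` on a connected open set `U ⊆ ℂ^N` whose points have
pairwise distinct coordinates, the zero-curvature equation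
`∂M(λ,t)/∂t_j + [A_j/(λ−t_j), M(λ,t)] − A_j/(λ−t_j)² = 0` (for all `j`, `t ∈ U`,
`λ ∉ {t_1,…,t_N}`, with `M(λ,t) = Σ_i A_i(t)/(λ−t_i)`) holds iff the `A_i` satisfy the
Schlesinger equation on `U`. -/
theorem schlesinger_iff_zero_curvature
    (r N : ℕ) (hr : 1 ≤ r) (hN : 2 ≤ N)
    (U : Set (Fin N → ℂ)) (hUo : IsOpen U) (hUc : IsConnected U)
    (hUd : ∀ t ∈ U, ∀ i j : Fin N, i ≠ j → t i ≠ t j)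
    (A : Fin N → (Fin N → ℂ) → Matrix (Fin r) (Fin r) ℂ)
    (hA : ∀ i, DifferentiableOn ℂ (A i) U) :
    (∀ j : Fin N, ∀ t ∈ U, ∀ z : ℂ, (∀ i : Fin N, z ≠ t i) →
        fderiv ℂ (fun s => ∑ i, (z - s i)⁻¹ • A i s) t (Pi.single j 1)
          + ⁅(z - t j)⁻¹ • A j t, ∑ i, (z - t i)⁻¹ • A i t⁆
          - ((z - t j) ^ 2)⁻¹ • A j t = 0)
    ↔
    (∀ i j : Fin N, ∀ t ∈ U,
        (i ≠ j → fderiv ℂ (A i) t (Pi.single j 1)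
            = (t i - t j)⁻¹ • ⁅A i t, A j t⁆) ∧
        fderiv ℂ (A i) t (Pi.single i 1)
            = -∑ k ∈ Finset.univ.erase i, (t i - t k)⁻¹ • ⁅A i t, A k t⁆) := by
  have hdiff : ∀ t ∈ U, ∀ i, DifferentiableAt ℂ (A i) t := fun t ht i =>
    ((hA i) t ht).differentiableAt (hUo.mem_nhds ht)
  constructor
  · intro h i j t ht
    have hzero : ∀ jj : Fin N, ∀ k : Fin N,
        fderiv ℂ (A k) t (Pi.single jj 1) -
          (if k = jj then -∑ m ∈ Finset.univ.erase jj, (t jj - t m)⁻¹ • ⁅A jj t, A m t⁆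
           else (t k - t jj)⁻¹ • ⁅A k t, A jj t⁆) = 0 := by
      intro jj k
      refine coeff_zero t (hUd t ht)
        (fun k => fderiv ℂ (A k) t (Pi.single jj 1) -
          (if k = jj then -∑ m ∈ Finset.univ.erase jj, (t jj - t m)⁻¹ • ⁅A jj t, A m t⁆
           else (t k - t jj)⁻¹ • ⁅A k t, A jj t⁆)) (fun z hz => ?_) k
      rw [← main_identity r N A t (hUd t ht) (hdiff t ht) jj z hz]
      exact h jj t ht z hz
    constructor
    · intro hij
      have := hzero j i
      rw [if_neg hij] at this
      exact sub_eq_zero.mp this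
    · have := hzero i i
      rw [if_pos rfl] at this
      exact sub_eq_zero.mp this
  · intro h j t ht z hz
    rw [main_identity r N A t (hUd t ht) (hdiff t ht) j z hz]
    refine Finset.sum_eq_zero fun k _ => ?_
    rcases eq_or_ne k j with rfl | hkj
    · rw [if_pos rfl, (h k k t ht).2, sub_self, smul_zero]
    · rw [if_neg hkj, (h k j t ht).1 hkj, sub_self, smul_zero]
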